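/- Every element of Γ whose ℤ/p-component is nontrivial has order exactly p; that is, if γ = (u, g) ∈ Γ with g ≠ 1, then γ^p = 1 and γ ≠ 1. -/

import Mathlib

open Multiplicative

/-- The action of `GL n ℤ` on `ℤⁿ`, as a homomorphism
`Multiplicative (ZMod p) →* MulAut (Multiplicative (Fin n → ℤ))`. -/
def matAutHom {p n : ℕ} (ρ : Multiplicative (ZMod p) →* Matrix.GeneralLinearGroup (Fin n) ℤ) :
    Multiplicative (ZMod p) →* MulAut (Multiplicative (Fin n → ℤ)) where
  toFun g :=
    { toFun := fun v => Multiplicative.ofAdd ((ρ g : Matrix (Fin n) (Fin n) ℤ).mulVec v.toAdd)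
      invFun := fun v =>
        Multiplicative.ofAdd ((((ρ g)⁻¹ : Matrix.GeneralLinearGroup (Fin n) ℤ) :
          Matrix (Fin n) (Fin n) ℤ).mulVec v.toAdd)
      left_inv := fun v => by simp [Matrix.mulVec_mulVec]
      right_inv := fun v => by simp [Matrix.mulVec_mulVec]
      map_mul' := fun u v => by simp [Matrix.mulVec_add] }
  map_one' := by ext v; simp
  map_mul' g h := by ext v; simp [Matrix.mulVec_mulVec]

/-- The group `Γ = ℤⁿ ⋊_ρ ℤ/p`. -/
abbrev Gamma {p n : ℕ} (ρ : Multiplicative (ZMod p) →* Matrix.GeneralLinearGroup (Fin n) ℤ) :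
    Type :=
  SemidirectProduct (Multiplicative (Fin n → ℤ)) (Multiplicative (ZMod p)) (matAutHom ρ)

/-- Every element of `Γ = ℤⁿ ⋊_ρ ℤ/p` whose `ℤ/p`-component is nontrivial has order
exactly `p`. -/
theorem order_p_of_nontrivial_component (p n : ℕ) (hp : p.Prime) (hodd : Odd p) (hn : 0 < n)
    (ρ : Multiplicative (ZMod p) →* Matrix.GeneralLinearGroup (Fin n) ℤ)
    (hfree : ∀ g : Multiplicative (ZMod p), g ≠ 1 → ∀ v : Fin n → ℤ,
      (ρ g : Matrix (Fin n) (Fin n) ℤ).mulVec v = v → v = 0)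
    (u : Fin n → ℤ) (g : ZMod p) (hg : g ≠ 0) :
    (⟨Multiplicative.ofAdd u, Multiplicative.ofAdd g⟩ : Gamma ρ) ^ p = 1 ∧
      (⟨Multiplicative.ofAdd u, Multiplicative.ofAdd g⟩ : Gamma ρ) ≠ 1 := by
  haveI : NeZero p := ⟨hp.ne_zero⟩
  set A : Matrix (Fin n) (Fin n) ℤ := (ρ (ofAdd g) : Matrix (Fin n) (Fin n) ℤ) with hA
  set γ : Gamma ρ := ⟨ofAdd u, ofAdd g⟩ with hγ
  have hgp : (ofAdd g : Multiplicative (ZMod p)) ^ p = 1 := by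
    have : p • g = 0 := by
      simp [nsmul_eq_mul, ZMod.natCast_self]
    rw [← ofAdd_nsmul, this, ofAdd_zero]
  have hAp : A ^ p = 1 := by
    have : ρ ((ofAdd g) ^ p) = 1 := by rw [hgp, map_one]
    rw [map_pow] at this
    calc A ^ p = ((ρ (ofAdd g)) ^ p : Matrix.GeneralLinearGroup (Fin n) ℤ) := by
          simp [hA]
      _ = 1 := by rw [this]; rfl
  have key : ∀ k : ℕ, γ ^ k =
      (⟨ofAdd (∑ i ∈ Finset.range k, (A ^ i).mulVec u), (ofAdd g) ^ k⟩ : Gamma ρ) := by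
    intro k
    induction k with
    | zero => simp
    | succ k ih =>
      rw [pow_succ, ih]
      ext : 1
      · show _ * (matAutHom ρ ((ofAdd g)^k)) (ofAdd u) = _
        have : (matAutHom ρ ((ofAdd g)^k)) (ofAdd u)
            = ofAdd ((A ^ k).mulVec u) := by
          show ofAdd ((ρ ((ofAdd g)^k) : Matrix (Fin n) (Fin n) ℤ).mulVec u) = _
          congr 1
          rw [map_pow]
          simp [hA]
        rw [this]
        show ofAdd (_ + _) = _
        simp [Finset.sum_range_succ]
      · show (ofAdd g)^k * ofAdd g = _
        rw [pow_succ]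
  obtain ⟨q, hq⟩ : ∃ q, p = q + 1 := ⟨p - 1, (Nat.succ_pred_eq_of_pos hp.pos).symm⟩
  have hfix : A.mulVec (∑ i ∈ Finset.range p, (A ^ i).mulVec u)
      = ∑ i ∈ Finset.range p, (A ^ i).mulVec u := by
    have hm : A.mulVec (∑ i ∈ Finset.range p, (A ^ i).mulVec u)
        = ∑ i ∈ Finset.range p, (A ^ (i + 1)).mulVec u := by
      have hm0 := map_sum A.mulVecLin (fun i => (A ^ i).mulVec u) (Finset.range p)
      simp only [Matrix.mulVecLin_apply, Matrix.mulVec_mulVec] at hm0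
      rw [hm0]
      exact Finset.sum_congr rfl fun i _ => by rw [← pow_succ']
    rw [hm, hq, Finset.sum_range_succ, Finset.sum_range_succ', ← hq, hAp]
    simp [Matrix.one_mulVec]
  have hg1 : (ofAdd g : Multiplicative (ZMod p)) ≠ 1 := by
    simpa using hg
  have hsum0 : (∑ i ∈ Finset.range p, (A ^ i).mulVec u) = 0 :=
    hfree (ofAdd g) hg1 _ hfix
  constructor
  · rw [key p, hsum0, hgp]
    rfl
  · intro h
    have := congrArg SemidirectProduct.right h
    simp only [SemidirectProduct.one_right] at this
    exact hg1 this
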